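/- Let m ≥ 1 and let Λ_1, Λ_2 be subsets of {1,...,m}. If for every l ∈ {1,...,m} we have |[l,m] ∩ Λ_1| ≤ |[l,m] ∩ Λ_2|, then there exists a strictly increasing function f : Λ_1 → Λ_2 with f(k) ≥ k for every k ∈ Λ_1. -/

import Mathlib

theorem stmt5 {m : ℕ} (hm : 1 ≤ m) (Λ₁ Λ₂ : Finset (Fin m))
    (h : ∀ l : Fin m, (Finset.Ici l ∩ Λ₁).card ≤ (Finset.Ici l ∩ Λ₂).card) :
    ∃ f : {k // k ∈ Λ₁} → {k // k ∈ Λ₂},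
      StrictMono f ∧ ∀ k : {k // k ∈ Λ₁}, (k : Fin m) ≤ (f k : Fin m) := by
  set n₁ := Λ₁.card with hn₁
  set n₂ := Λ₂.card with hn₂
  have hle : n₁ ≤ n₂ := by
    have h0 := h ⟨0, hm⟩
    have e1 : Finset.Ici (⟨0, hm⟩ : Fin m) ∩ Λ₁ = Λ₁ := by
      ext x; simp [Fin.le_def]
    have e2 : Finset.Ici (⟨0, hm⟩ : Fin m) ∩ Λ₂ = Λ₂ := by
      ext x; simp [Fin.le_def]
    rwa [e1, e2] at h0
  let e₁ := Λ₁.orderIsoOfFin hn₁.symm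
  let e₂ := Λ₂.orderIsoOfFin hn₂.symm
  have hidx : ∀ i : Fin n₁, (i : ℕ) + (n₂ - n₁) < n₂ := fun i => by
    have := i.2; omega
  refine ⟨fun k => e₂ ⟨(e₁.symm k : ℕ) + (n₂ - n₁), hidx _⟩, ?_, ?_⟩
  · intro a b hab
    have hlt : (e₁.symm a : ℕ) < (e₁.symm b : ℕ) := e₁.symm.strictMono hab
    exact e₂.strictMono (by simp only [Fin.lt_def]; omega)
  · intro k
    by_contra hlt
    push_neg at hlt
    set i := e₁.symm k with hi
    set j : Fin n₂ := ⟨(i : ℕ) + (n₂ - n₁), hidx i⟩ with hj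
    have hlow : n₁ - i ≤ (Finset.Ici (k : Fin m) ∩ Λ₁).card := by
      have hmain := Finset.card_le_card_of_injOn (fun t : Fin n₁ => (e₁ t : Fin m))
        (s := Finset.Ici i) (t := Finset.Ici (k : Fin m) ∩ Λ₁) ?_ ?_
      · simpa [Fin.card_Ici] using hmain
      · intro t ht
        simp only [Finset.mem_coe, Finset.mem_Ici] at ht
        simp only [Finset.mem_coe, Finset.mem_inter, Finset.mem_Ici]
        refine ⟨?_, (e₁ t).2⟩
        have hmono : e₁ i ≤ e₁ t := e₁.monotone ht
        rw [hi, e₁.apply_symm_apply] at hmono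
        exact hmono
      · intro a _ b _ hab
        exact e₁.injective (Subtype.ext hab)
    have hhigh : (Finset.Ici (k : Fin m) ∩ Λ₂).card ≤ n₂ - 1 - j := by
      have hmain := Finset.card_le_card_of_injOn
        (fun x : Fin m => if hx : x ∈ Λ₂ then (e₂.symm ⟨x, hx⟩ : Fin n₂) else j)
        (s := Finset.Ici (k : Fin m) ∩ Λ₂) (t := Finset.Ioi j) ?_ ?_
      · simpa [Fin.card_Ioi] using hmain
      · intro x hx
        simp only [Finset.mem_coe, Finset.mem_inter, Finset.mem_Ici] at hx
        simp only [Finset.mem_coe, Finset.mem_Ioi, dif_pos hx.2]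
        by_contra hc
        push_neg at hc
        have hmono : (e₂ (e₂.symm ⟨x, hx.2⟩) : {y // y ∈ Λ₂}) ≤ e₂ j := e₂.monotone hc
        rw [e₂.apply_symm_apply] at hmono
        have : (x : Fin m) ≤ (e₂ j : Fin m) := hmono
        exact absurd (lt_of_le_of_lt (hx.1.trans this) hlt) (lt_irrefl _)
      · intro a ha b hb hab
        simp only [Finset.mem_coe, Finset.mem_inter] at ha hb
        simp only [dif_pos ha.2, dif_pos hb.2] at hab
        exact congrArg Subtype.val (e₂.symm.injective hab)
    have hk := h (k : Fin m)
    have hi2 : (i : ℕ) < n₁ := i.2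
    have hjv : (j : ℕ) = (i : ℕ) + (n₂ - n₁) := rfl
    omega
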